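/- arXiv:1409.1128 — 2 statements merged into one kernel-verified Lean document; each statement's English description precedes it below -/
import Mathlib

section
/- Let H₁, H₂ be complex Hilbert spaces, ν a selfadjoint bounded operator on H₁ that is strictly positive definite, a₀ a selfadjoint nonnegative bounded operator on H₂ that is strictly positive definite on its range, ζ₀ : H₁ → H₂ a bounded operator, S a selfadjoint bounded operator on H₁, and R a selfadjoint bounded operator on H₂ that is strictly positive definite on the kernel of a₀. Then there exist ρ₁ > 0 and c > 0 such that for every ρ > ρ₁ the block operator on H₁ ⊕ H₂ given by ρ·diag(ν, a₀) + ((S + ζ₀*Rζ₀, −ζ₀*R), (−Rζ₀, R)) is strictly positive definite with constant c, i.e. ⟨(x,y), (ρ·diag(ν,a₀) + ((S + ζ₀*Rζ₀, −ζ₀*R),(−Rζ₀, R)))(x,y)⟩ ≥ c(‖x‖² + ‖y‖²) for all (x,y) ∈ H₁ ⊕ H₂. -/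
open ContinuousLinearMap
noncomputable section

namespace Evo

variable (H₁ H₂ : Type*)
  [NormedAddCommGroup H₁] [InnerProductSpace ℂ H₁] [CompleteSpace H₁]
  [NormedAddCommGroup H₂] [InnerProductSpace ℂ H₂] [CompleteSpace H₂]

/-- The Hilbert space direct sum `H₁ ⊕ H₂`. -/
abbrev Duo := WithLp 2 (H₁ × H₂)

def eD : Duo H₁ H₂ ≃L[ℂ] H₁ × H₂ := WithLp.prodContinuousLinearEquiv 2 ℂ _ _

variable {H₁ H₂}

def π₁ : Duo H₁ H₂ →L[ℂ] H₁ := (fst ℂ H₁ H₂).comp (eD H₁ H₂ : _ →L[ℂ] _)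
def π₂ : Duo H₁ H₂ →L[ℂ] H₂ := (snd ℂ H₁ H₂).comp (eD H₁ H₂ : _ →L[ℂ] _)

/-- A block operator on `H₁ ⊕ H₂` from its two rows. -/
def mk2 (r1 : Duo H₁ H₂ →L[ℂ] H₁) (r2 : Duo H₁ H₂ →L[ℂ] H₂) : Duo H₁ H₂ →L[ℂ] Duo H₁ H₂ :=
  ((eD H₁ H₂).symm : (H₁ × H₂) →L[ℂ] Duo H₁ H₂).comp (r1.prod r2)

/-- A bounded operator is strictly positive definite on a subspace `V`. -/
def StrictPosOn {E : Type*} [NormedAddCommGroup E] [InnerProductSpace ℂ E]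
    (T : E →L[ℂ] E) (V : Submodule ℂ E) : Prop :=
  ∃ c > (0 : ℝ), ∀ x ∈ V, c * ‖x‖ ^ 2 ≤ (inner ℂ x (T x) : ℂ).re

private lemma inner_real_smul_right' {E : Type*} [NormedAddCommGroup E] [InnerProductSpace ℂ E]
    (x y : E) (r : ℝ) : (inner ℂ x (r • y) : ℂ) = (r : ℂ) * inner ℂ x y := by
  rw [← algebraMap_smul ℂ r y, Complex.coe_algebraMap, inner_smul_right]

/-- The real part of an inner ℂ product against an operator image is bounded by `‖T‖‖a‖‖b‖`. -/
private lemma re_inner_op_le {E : Type*} [NormedAddCommGroup E] [InnerProductSpace ℂ E]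
    (T : E →L[ℂ] E) (a b : E) : |(inner ℂ a (T b) : ℂ).re| ≤ ‖T‖ * ‖a‖ * ‖b‖ := by
  have h1 : |(inner ℂ a (T b) : ℂ).re| ≤ ‖(inner ℂ a (T b) : ℂ)‖ :=
    Complex.abs_re_le_norm _
  have h2 : ‖(inner ℂ a (T b) : ℂ)‖ ≤ ‖a‖ * ‖T b‖ := norm_inner_le_norm a (T b)
  have h3 : ‖T b‖ ≤ ‖T‖ * ‖b‖ := T.le_opNorm b
  have h4 : ‖a‖ * ‖T b‖ ≤ ‖a‖ * (‖T‖ * ‖b‖) :=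
    mul_le_mul_of_nonneg_left h3 (norm_nonneg a)
  nlinarith [norm_nonneg a]

/-- Strict positivity on the orthogonal complement of the kernel of a selfadjoint
operator, from strict positivity on the range. -/
private lemma strictpos_on_ker_orth {H₂ : Type*}
    [NormedAddCommGroup H₂] [InnerProductSpace ℂ H₂] [CompleteSpace H₂]
    (a₀ : H₂ →L[ℂ] H₂) (ha₀ : IsSelfAdjoint a₀) {c₁ : ℝ}
    (h : ∀ v ∈ LinearMap.range (a₀ : H₂ →ₗ[ℂ] H₂), c₁ * ‖v‖ ^ 2 ≤ (inner ℂ v (a₀ v) : ℂ).re) :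
    ∀ v ∈ (LinearMap.ker (a₀ : H₂ →ₗ[ℂ] H₂) : Submodule ℂ H₂)ᗮ, c₁ * ‖v‖ ^ 2 ≤ (inner ℂ v (a₀ v) : ℂ).re := by
  have hsub : ((LinearMap.ker (a₀ : H₂ →ₗ[ℂ] H₂) : Submodule ℂ H₂))ᗮ ≤
      (LinearMap.range (a₀ : H₂ →ₗ[ℂ] H₂) : Submodule ℂ H₂).topologicalClosure := by
    rw [← Submodule.orthogonal_orthogonal_eq_closure]
    apply Submodule.orthogonal_le
    intro y hy
    have h := hy (a₀ (a₀ y)) ⟨a₀ y, rfl⟩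
    have : (inner ℂ (a₀ y) (a₀ y) : ℂ) = 0 := by
      rw [← ContinuousLinearMap.adjoint_inner_left, ha₀.adjoint_eq]
      exact h
    simpa [inner_self_eq_zero] using this
  intro v hv
  have hcl : IsClosed {w : H₂ | c₁ * ‖w‖ ^ 2 ≤ (inner ℂ w (a₀ w) : ℂ).re} := by
    apply isClosed_le
    · exact (continuous_const.mul ((continuous_norm).pow 2))
    · exact Complex.continuous_re.comp (continuous_id.inner a₀.continuous)
  have hv' : v ∈ closure ((LinearMap.range (a₀ : H₂ →ₗ[ℂ] H₂) : Submodule ℂ H₂) : Set H₂) := hsub hv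
  exact hcl.closure_subset_iff.mpr (fun w hw => h w hw) hv'

/-- The real part of the quadratic form of the block operator. -/
private lemma quad_re (ν S : H₁ →L[ℂ] H₁) (a₀ R : H₂ →L[ℂ] H₂) (ζ₀ : H₁ →L[ℂ] H₂) (ρ : ℝ)
    (p : Duo H₁ H₂) :
    (inner ℂ p
          ((mk2
            ((((ρ : ℂ) • ν + S + (adjoint ζ₀).comp (R.comp ζ₀)).comp π₁)
              + (-((adjoint ζ₀).comp R)).comp π₂)
            ((-(R.comp ζ₀)).comp π₁ + ((ρ : ℂ) • a₀ + R).comp π₂)) p) : ℂ).re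
    = ρ * (inner ℂ p.fst (ν p.fst) : ℂ).re + (inner ℂ p.fst (S p.fst) : ℂ).re
      + ρ * (inner ℂ p.snd (a₀ p.snd) : ℂ).re
      + (inner ℂ (ζ₀ p.fst - p.snd) (R (ζ₀ p.fst - p.snd)) : ℂ).re := by
  have key : (inner ℂ p
          ((mk2
            ((((ρ : ℂ) • ν + S + (adjoint ζ₀).comp (R.comp ζ₀)).comp π₁)
              + (-((adjoint ζ₀).comp R)).comp π₂)
            ((-(R.comp ζ₀)).comp π₁ + ((ρ : ℂ) • a₀ + R).comp π₂)) p) : ℂ)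
      = (ρ:ℂ) * inner ℂ p.fst (ν p.fst) + inner ℂ p.fst (S p.fst)
        + (ρ:ℂ) * inner ℂ p.snd (a₀ p.snd)
        + inner ℂ (ζ₀ p.fst - p.snd) (R (ζ₀ p.fst - p.snd)) := by
    simp [mk2, π₁, π₂, eD, WithLp.prod_inner_apply, inner_add_right, inner_sub_right,
      inner_sub_left, inner_real_smul_right', ContinuousLinearMap.adjoint_inner_right, map_sub]
    ring
  rw [key]
  simp [Complex.add_re, Complex.mul_re, Complex.ofReal_re, Complex.ofReal_im]

set_option maxHeartbeats 2000000 in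
/-- **The block operator `ρ·diag(ν,a₀) + ((S+ζ₀*Rζ₀, −ζ₀*R),(−Rζ₀, R))` is strictly positive
definite, uniformly for all large `ρ`.** -/
theorem block_strictly_positive
    (ν : H₁ →L[ℂ] H₁) (hν : IsSelfAdjoint ν)
    (hνpos : ∃ c > (0 : ℝ), ∀ x : H₁, c * ‖x‖ ^ 2 ≤ (inner ℂ x (ν x) : ℂ).re)
    (a₀ : H₂ →L[ℂ] H₂) (ha₀ : IsSelfAdjoint a₀)
    (ha₀nonneg : ∀ y : H₂, 0 ≤ (inner ℂ y (a₀ y) : ℂ).re)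
    (ha₀ran : StrictPosOn a₀ (LinearMap.range (a₀ : H₂ →ₗ[ℂ] H₂)))
    (ζ₀ : H₁ →L[ℂ] H₂)
    (S : H₁ →L[ℂ] H₁) (hS : IsSelfAdjoint S)
    (R : H₂ →L[ℂ] H₂) (hR : IsSelfAdjoint R)
    (hRker : StrictPosOn R (LinearMap.ker (a₀ : H₂ →ₗ[ℂ] H₂))) :
    ∃ ρ₁ > (0 : ℝ), ∃ c > (0 : ℝ), ∀ ρ > ρ₁, ∀ p : Duo H₁ H₂,
      c * (‖(WithLp.equiv 2 (H₁ × H₂) p).1‖ ^ 2 + ‖(WithLp.equiv 2 (H₁ × H₂) p).2‖ ^ 2) ≤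
        (inner ℂ p
          ((mk2
            -- first row `ρν + S + ζ₀*Rζ₀` and `−ζ₀*R` :
            ((((ρ : ℂ) • ν + S + (adjoint ζ₀).comp (R.comp ζ₀)).comp π₁)
              + (-((adjoint ζ₀).comp R)).comp π₂)
            -- second row `−Rζ₀` and `ρa₀ + R` :
            ((-(R.comp ζ₀)).comp π₁ + ((ρ : ℂ) • a₀ + R).comp π₂)) p) : ℂ).re := by
  obtain ⟨cν, hcν, hνlow⟩ := hνpos
  obtain ⟨c₁, hc₁, ha₁⟩ := ha₀ran
  obtain ⟨cR, hcR, hRlow⟩ := hRker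
  have hK := strictpos_on_ker_orth a₀ ha₀ ha₁
  obtain ⟨C, hCdef, hC⟩ : ∃ C : ℝ, C = ‖R‖ + 2 * ‖R‖ ^ 2 / cR + 1 ∧ 0 < C :=
    ⟨_, rfl, by positivity⟩
  obtain ⟨ρ₁, hρ₁def, hρ₁pos⟩ :
      ∃ r : ℝ, r = max ((1 + ‖S‖ + 2 * C * ‖ζ₀‖ ^ 2) / cν) ((cR / 2 + 2 * C) / c₁) ∧ 0 < r :=
    ⟨_, rfl, lt_max_iff.mpr (Or.inl (by positivity))⟩
  refine ⟨ρ₁, hρ₁pos, min 1 (cR / 2), lt_min one_pos (half_pos hcR), ?_⟩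
  have est : ∀ ρ > ρ₁, ∀ (x : H₁) (y : H₂),
      min 1 (cR / 2) * (‖x‖ ^ 2 + ‖y‖ ^ 2) ≤
        ρ * (inner ℂ x (ν x) : ℂ).re + (inner ℂ x (S x) : ℂ).re
          + ρ * (inner ℂ y (a₀ y) : ℂ).re
          + (inner ℂ (ζ₀ x - y) (R (ζ₀ x - y)) : ℂ).re := by
    intro ρ hρ x y
    have hρpos : 0 < ρ := hρ₁pos.trans hρ
    haveI : CompleteSpace (LinearMap.ker (a₀ : H₂ →ₗ[ℂ] H₂)) :=
      (ContinuousLinearMap.isClosed_ker a₀).completeSpace_coe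
    obtain ⟨y₀, hy₀mem, hy₀def⟩ :
        ∃ y₀ : H₂, y₀ ∈ LinearMap.ker (a₀ : H₂ →ₗ[ℂ] H₂) ∧
          y₀ = (Submodule.orthogonalProjection (LinearMap.ker (a₀ : H₂ →ₗ[ℂ] H₂)) y : H₂) :=
      ⟨_, SetLike.coe_mem _, rfl⟩
    obtain ⟨y₁, hy₁def⟩ : ∃ y₁ : H₂, y₁ = y - y₀ := ⟨_, rfl⟩
    have hy₁mem : y₁ ∈ (LinearMap.ker (a₀ : H₂ →ₗ[ℂ] H₂) : Submodule ℂ H₂)ᗮ := by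
      rw [hy₁def, hy₀def]
      exact Submodule.sub_starProjection_mem_orthogonal y
    have hy01 : y = y₀ + y₁ := by rw [hy₁def]; abel
    -- Pythagoras
    have hpyth : ‖y‖ ^ 2 = ‖y₀‖ ^ 2 + ‖y₁‖ ^ 2 := by
      rw [hy01]
      have := norm_add_sq_eq_norm_sq_add_norm_sq_of_inner_eq_zero y₀ y₁
        ((Submodule.mem_orthogonal _ _).mp hy₁mem y₀ hy₀mem)
      nlinarith [this]
    -- the a₀ term
    have ha₀y : a₀ y = a₀ y₁ := by
      rw [hy01, map_add, (show a₀ y₀ = 0 from LinearMap.mem_ker.mp hy₀mem), zero_add]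
    have hinner_a : (inner ℂ y (a₀ y) : ℂ).re = (inner ℂ y₁ (a₀ y₁) : ℂ).re := by
      rw [ha₀y, hy01, inner_add_left]
      have h0 : (inner ℂ y₀ (a₀ y₁) : ℂ) = 0 := by
        rw [← ContinuousLinearMap.adjoint_inner_left, ha₀.adjoint_eq,
          (show a₀ y₀ = 0 from LinearMap.mem_ker.mp hy₀mem), inner_zero_left]
      rw [h0, zero_add]
    have ea : c₁ * ‖y₁‖ ^ 2 ≤ (inner ℂ y (a₀ y) : ℂ).re := by
      rw [hinner_a]; exact hK y₁ hy₁mem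
    -- the R term
    obtain ⟨w, hwdef⟩ : ∃ w : H₂, w = ζ₀ x - y₁ := ⟨_, rfl⟩
    have hz : ζ₀ x - y = w - y₀ := by rw [hy01, hwdef]; abel
    have eR : cR / 2 * ‖y₀‖ ^ 2 - C * ‖w‖ ^ 2 ≤
        (inner ℂ (ζ₀ x - y) (R (ζ₀ x - y)) : ℂ).re := by
      rw [hz]
      have hexp : (inner ℂ (w - y₀) (R (w - y₀)) : ℂ).re
          = (inner ℂ w (R w) : ℂ).re - (inner ℂ w (R y₀) : ℂ).re
            - (inner ℂ y₀ (R w) : ℂ).re + (inner ℂ y₀ (R y₀) : ℂ).re := by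
        simp [map_sub, inner_sub_left, inner_sub_right]
        ring
      rw [hexp]
      have b1 := abs_le.mp (re_inner_op_le R w w)
      have b2 := abs_le.mp (re_inner_op_le R w y₀)
      have b3 := abs_le.mp (re_inner_op_le R y₀ w)
      have b4 := hRlow y₀ hy₀mem
      have key : 2 * ‖R‖ * ‖w‖ * ‖y₀‖ ≤
          cR / 2 * ‖y₀‖ ^ 2 + 2 * ‖R‖ ^ 2 / cR * ‖w‖ ^ 2 := by
        rw [← sub_nonneg]
        have h : cR / 2 * ‖y₀‖ ^ 2 + 2 * ‖R‖ ^ 2 / cR * ‖w‖ ^ 2 - 2 * ‖R‖ * ‖w‖ * ‖y₀‖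
            = (cR * ‖y₀‖ - 2 * ‖R‖ * ‖w‖) ^ 2 / (2 * cR) := by
          field_simp
          ring
        rw [h]
        positivity
      have hCW : (‖R‖ + 2 * ‖R‖ ^ 2 / cR) * ‖w‖ ^ 2 ≤ C * ‖w‖ ^ 2 :=
        mul_le_mul_of_nonneg_right (by rw [hCdef]; linarith) (sq_nonneg _)
      have hsqw : ‖w‖ * ‖w‖ = ‖w‖ ^ 2 := by ring
      linarith [b1.1, b2.2, b3.2, b4, key, hCW]
    -- bound on ‖w‖²
    have hwbound : ‖w‖ ^ 2 ≤ 2 * ‖ζ₀‖ ^ 2 * ‖x‖ ^ 2 + 2 * ‖y₁‖ ^ 2 := by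
      have h1 : ‖w‖ ≤ ‖ζ₀ x‖ + ‖y₁‖ := by rw [hwdef]; exact norm_sub_le _ _
      have h2 : ‖ζ₀ x‖ ≤ ‖ζ₀‖ * ‖x‖ := ζ₀.le_opNorm x
      nlinarith [norm_nonneg w, norm_nonneg (ζ₀ x), norm_nonneg y₁, norm_nonneg x,
        norm_nonneg ζ₀, sq_nonneg (‖ζ₀‖ * ‖x‖ - ‖y₁‖)]
    -- the S term
    have eS : -(‖S‖ * ‖x‖ ^ 2) ≤ (inner ℂ x (S x) : ℂ).re := by
      have := abs_le.mp (re_inner_op_le S x x)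
      nlinarith [this.1]
    -- scalar inequalities coming from ρ > ρ₁
    have hρν : 1 + ‖S‖ + 2 * C * ‖ζ₀‖ ^ 2 ≤ ρ * cν := by
      have h1 : (1 + ‖S‖ + 2 * C * ‖ζ₀‖ ^ 2) / cν ≤ ρ₁ := hρ₁def ▸ le_max_left _ _
      have h2 : (1 + ‖S‖ + 2 * C * ‖ζ₀‖ ^ 2) / cν ≤ ρ := h1.trans hρ.le
      calc 1 + ‖S‖ + 2 * C * ‖ζ₀‖ ^ 2
          = (1 + ‖S‖ + 2 * C * ‖ζ₀‖ ^ 2) / cν * cν := (div_mul_cancel₀ _ (ne_of_gt hcν)).symm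
        _ ≤ ρ * cν := mul_le_mul_of_nonneg_right h2 hcν.le
    have hρa : cR / 2 + 2 * C ≤ ρ * c₁ := by
      have h1 : (cR / 2 + 2 * C) / c₁ ≤ ρ₁ := hρ₁def ▸ le_max_right _ _
      have h2 : (cR / 2 + 2 * C) / c₁ ≤ ρ := h1.trans hρ.le
      calc cR / 2 + 2 * C
          = (cR / 2 + 2 * C) / c₁ * c₁ := (div_mul_cancel₀ _ (ne_of_gt hc₁)).symm
        _ ≤ ρ * c₁ := mul_le_mul_of_nonneg_right h2 hc₁.le
    have hx2 : (0:ℝ) ≤ ‖x‖ ^ 2 := sq_nonneg _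
    have hy02 : (0:ℝ) ≤ ‖y₀‖ ^ 2 := sq_nonneg _
    have hy12 : (0:ℝ) ≤ ‖y₁‖ ^ 2 := sq_nonneg _
    have e1 : ρ * (cν * ‖x‖ ^ 2) ≤ ρ * (inner ℂ x (ν x) : ℂ).re :=
      mul_le_mul_of_nonneg_left (hνlow x) hρpos.le
    have e3 : ρ * (c₁ * ‖y₁‖ ^ 2) ≤ ρ * (inner ℂ y (a₀ y) : ℂ).re :=
      mul_le_mul_of_nonneg_left ea hρpos.le
    have hA : (1 + ‖S‖ + 2 * C * ‖ζ₀‖ ^ 2) * ‖x‖ ^ 2 ≤ ρ * cν * ‖x‖ ^ 2 :=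
      mul_le_mul_of_nonneg_right hρν hx2
    have hB : (cR / 2 + 2 * C) * ‖y₁‖ ^ 2 ≤ ρ * c₁ * ‖y₁‖ ^ 2 :=
      mul_le_mul_of_nonneg_right hρa hy12
    have e5 : C * ‖w‖ ^ 2 ≤ C * (2 * ‖ζ₀‖ ^ 2 * ‖x‖ ^ 2 + 2 * ‖y₁‖ ^ 2) :=
      mul_le_mul_of_nonneg_left hwbound hC.le
    have hminx : min 1 (cR / 2) * ‖x‖ ^ 2 ≤ 1 * ‖x‖ ^ 2 :=
      mul_le_mul_of_nonneg_right (min_le_left _ _) hx2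
    have hminy0 : min 1 (cR / 2) * ‖y₀‖ ^ 2 ≤ cR / 2 * ‖y₀‖ ^ 2 :=
      mul_le_mul_of_nonneg_right (min_le_right _ _) hy02
    have hminy1 : min 1 (cR / 2) * ‖y₁‖ ^ 2 ≤ cR / 2 * ‖y₁‖ ^ 2 :=
      mul_le_mul_of_nonneg_right (min_le_right _ _) hy12
    rw [hpyth]
    linarith [e1, e3, hA, hB, e5, hminx, hminy0, hminy1, eR, eS]
  intro ρ hρ p
  rw [quad_re]
  exact est ρ hρ p.fst p.snd

end Evo
end
end

section
/- Let H be a complex Hilbert space, M₀ a selfadjoint bounded operator on H, r > 0 and M₁ : B(0,r) → L(H) an analytic and bounded function, and set M(z) := M₀ + zM₁(z). If there exist c > 0 and ρ₁ > 0 such that ρM₀ + Re M₁(0) ≥ c for all ρ > ρ₁, then there exist ρ₀ > 0 and c′ > 0 such that for all z in the open disc B(1/(2ρ₀), 1/(2ρ₀)) ⊆ ℂ one has Re( z⁻¹M(z) ) := ½( z⁻¹M(z) + (z⁻¹M(z))* ) ≥ c′. -/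
open ContinuousLinearMap
noncomputable section

/-- **If `ρM₀ + Re M₁(0) ≥ c` for all large `ρ`, then `Re z⁻¹M(z) ≥ c'` on a small disc
`B(1/(2ρ₀), 1/(2ρ₀))`, where `M(z) = M₀ + zM₁(z)` with `M₁` analytic and bounded.** -/
theorem re_inv_smul_material_law_pos
    (H : Type*) [NormedAddCommGroup H] [InnerProductSpace ℂ H] [CompleteSpace H]
    (M₀ : H →L[ℂ] H) (hM₀ : IsSelfAdjoint M₀)
    (r : ℝ) (hr : 0 < r) (M₁ : ℂ → (H →L[ℂ] H))
    (hM₁ : AnalyticOn ℂ M₁ (Metric.ball 0 r))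
    (hM₁bdd : ∃ K : ℝ, ∀ z ∈ Metric.ball (0 : ℂ) r, ‖M₁ z‖ ≤ K)
    (c ρ₁ : ℝ) (hc : 0 < c) (hρ₁ : 0 < ρ₁)
    -- `ρM₀ + Re M₁(0) ≥ c` for all `ρ > ρ₁` :
    (hpos : ∀ ρ > ρ₁, ∀ x : H,
      c * ‖x‖ ^ 2 ≤ (inner ℂ x (((ρ : ℂ) • M₀ +
        (1 / 2 : ℂ) • (M₁ 0 + adjoint (M₁ 0))) x) : ℂ).re) :
    -- then `Re (z⁻¹ M(z)) ≥ c'` on a disc `B(1/(2ρ₀), 1/(2ρ₀))` :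
    ∃ ρ₀ > (0 : ℝ), ∃ c' > (0 : ℝ),
      ∀ z ∈ Metric.ball ((2 * ρ₀ : ℂ))⁻¹ (1 / (2 * ρ₀)), ∀ x : H,
        c' * ‖x‖ ^ 2 ≤ (inner ℂ x ((z⁻¹ • (M₀ + z • M₁ z)) x) : ℂ).re := by
  -- continuity of `M₁` at `0`
  have h0r : (0 : ℂ) ∈ Metric.ball (0 : ℂ) r := by simpa using hr
  have hcont : ContinuousAt M₁ 0 :=
    (hM₁.continuousOn).continuousAt (Metric.isOpen_ball.mem_nhds h0r)
  obtain ⟨δ, hδ, hδ'⟩ := Metric.continuousAt_iff.mp hcont (c / 2) (by positivity)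
  obtain ⟨ρ₀, hρ₀def⟩ : ∃ ρ₀ : ℝ, ρ₀ = ρ₁ + 1 / δ + 1 := ⟨_, rfl⟩
  have hρ₀pos : 0 < ρ₀ := by rw [hρ₀def]; positivity
  refine ⟨ρ₀, hρ₀pos, c / 2, by positivity, ?_⟩
  intro z hz x
  obtain ⟨s, hsdef⟩ : ∃ s : ℝ, s = (2 * ρ₀)⁻¹ := ⟨_, rfl⟩
  have hs : 0 < s := by rw [hsdef]; positivity
  have hs2 : 2 * s * ρ₀ = 1 := by
    rw [hsdef]; field_simp
  -- translate the ball membership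
  have hz' : ‖z - (s : ℂ)‖ < s := by
    have hcast : ((2 * ρ₀ : ℂ))⁻¹ = ((s : ℝ) : ℂ) := by rw [hsdef]; push_cast; ring
    have hb := hz
    rw [Metric.mem_ball, Complex.dist_eq, hcast] at hb
    calc ‖z - (s : ℂ)‖ < 1 / (2 * ρ₀) := hb
    _ = s := by rw [hsdef, one_div]
  have hsq : (z.re - s) * (z.re - s) + z.im * z.im < s ^ 2 := by
    have h1 : (‖z - (s : ℂ)‖) ^ 2 < s ^ 2 := by
      have := norm_nonneg (z - (s : ℂ))
      nlinarith
    rw [Complex.sq_norm, Complex.normSq_apply] at h1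
    simpa using h1
  have hzre : 0 < z.re := by nlinarith
  have hnormSq : z.re ^ 2 + z.im ^ 2 < 2 * s * z.re := by nlinarith
  have hz0 : z ≠ 0 := by
    intro h; rw [h] at hzre; simp at hzre
  have hnsq : Complex.normSq z = z.re ^ 2 + z.im ^ 2 := by
    rw [Complex.normSq_apply]; ring
  have hnsqpos : 0 < z.re ^ 2 + z.im ^ 2 := by nlinarith
  -- `Re z⁻¹ > ρ₀`
  have hρ : ρ₀ < (z⁻¹).re := by
    rw [Complex.inv_re, hnsq, lt_div_iff₀ hnsqpos]
    nlinarith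
  have hρ₁ρ₀ : ρ₁ < ρ₀ := by
    have h1δ : 0 < 1 / δ := by positivity
    rw [hρ₀def]; linarith
  have hρρ₁ : ρ₁ < (z⁻¹).re := lt_trans hρ₁ρ₀ hρ
  -- `|z| < δ`, hence `‖M₁ z - M₁ 0‖ < c/2`
  have habs : ‖z‖ < δ := by
    have h1 : ‖z‖ ≤ ‖z - (s : ℂ)‖ + ‖((s : ℂ))‖ := by
      simpa using norm_add_le (z - (s : ℂ)) ((s : ℂ))
    have h2 : ‖((s : ℂ))‖ = s := by
      rw [Complex.norm_of_nonneg hs.le]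
    have h3 : ‖z‖ < 2 * s := by rw [h2] at h1; linarith
    have hδδ : δ * (1 / δ) = 1 := by field_simp
    have h5 : δ * ρ₀ = δ * ρ₁ + 1 + δ := by
      rw [hρ₀def, mul_add, mul_add, hδδ, mul_one]
    have h4 : 2 * s < δ := by nlinarith
    linarith
  have hM₁z : ‖M₁ z - M₁ 0‖ < c / 2 := by
    have := hδ' (x := z) (by simpa [Complex.dist_eq] using habs)
    rwa [dist_eq_norm] at this
  -- inner product identities
  set a : ℂ := inner ℂ x (M₀ x) with ha
  set b0 : ℂ := inner ℂ x ((M₁ 0) x) with hb0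
  set bz : ℂ := inner ℂ x ((M₁ z) x) with hbz
  have haim : a.im = 0 := by
    have h1 : (inner ℂ (M₀ x) x : ℂ) = inner ℂ x (M₀ x) := by
      conv_lhs => rw [← hM₀.adjoint_eq]
      exact ContinuousLinearMap.adjoint_inner_left M₀ x x
    have h2 : (starRingEnd ℂ) a = a := by
      rw [ha, inner_conj_symm]; exact h1
    exact Complex.conj_eq_iff_im.mp h2
  have hzz : z⁻¹ * z = 1 := inv_mul_cancel₀ hz0
  -- rewrite the goal inner product
  have hgoal : (inner ℂ x ((z⁻¹ • (M₀ + z • M₁ z)) x) : ℂ) = z⁻¹ * a + bz := by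
    simp only [ContinuousLinearMap.smul_apply, ContinuousLinearMap.add_apply,
      inner_smul_right, inner_add_right]
    rw [← ha, ← hbz, mul_add, ← mul_assoc, hzz, one_mul]
  -- rewrite the hypothesis inner product
  have hhyp : ∀ ρ : ℝ, (inner ℂ x ((((ρ : ℂ)) • M₀ +
      (1 / 2 : ℂ) • (M₁ 0 + adjoint (M₁ 0))) x) : ℂ).re = ρ * a.re + b0.re := by
    intro ρ
    have hadj : (inner ℂ x ((adjoint (M₁ 0)) x) : ℂ) = (starRingEnd ℂ) b0 := by
      rw [ContinuousLinearMap.adjoint_inner_right, hb0, ← inner_conj_symm]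
    simp only [ContinuousLinearMap.smul_apply, ContinuousLinearMap.add_apply,
      inner_smul_right, inner_add_right]
    rw [← ha, ← hb0, hadj]
    have hconj : b0 + (starRingEnd ℂ) b0 = 2 * (b0.re : ℂ) := by
      rw [Complex.add_conj]; push_cast; ring
    rw [hconj]
    simp [Complex.mul_re]
  -- the estimate on `M₁ z - M₁ 0`
  have hdiff : b0.re - bz.re ≤ c / 2 * ‖x‖ ^ 2 := by
    have h1 : (b0 - bz) = inner ℂ x ((M₁ 0 - M₁ z) x) := by
      rw [hb0, hbz, ContinuousLinearMap.sub_apply, inner_sub_right]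
    have h2 : (b0 - bz).re ≤ ‖b0 - bz‖ := Complex.re_le_norm _
    have h3 : ‖b0 - bz‖ ≤ ‖M₁ 0 - M₁ z‖ * ‖x‖ ^ 2 := by
      rw [h1]
      calc ‖(inner ℂ x ((M₁ 0 - M₁ z) x) : ℂ)‖
          = ‖(inner ℂ x ((M₁ 0 - M₁ z) x) : ℂ)‖ := rfl
        _ ≤ ‖x‖ * ‖(M₁ 0 - M₁ z) x‖ := norm_inner_le_norm _ _
        _ ≤ ‖x‖ * (‖M₁ 0 - M₁ z‖ * ‖x‖) := by
            gcongr; exact ContinuousLinearMap.le_opNorm _ _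
        _ = ‖M₁ 0 - M₁ z‖ * ‖x‖ ^ 2 := by ring
    have h4 : ‖M₁ 0 - M₁ z‖ ≤ c / 2 := by
      rw [norm_sub_rev]; linarith
    have h5 : (b0 - bz).re = b0.re - bz.re := by simp
    have h6 : ‖M₁ 0 - M₁ z‖ * ‖x‖ ^ 2 ≤ c / 2 * ‖x‖ ^ 2 :=
      mul_le_mul_of_nonneg_right h4 (sq_nonneg _)
    linarith
  -- put everything together
  have hmain := hpos ((z⁻¹).re) hρρ₁ x
  rw [hhyp] at hmain
  rw [hgoal]
  have hre : (z⁻¹ * a + bz).re = (z⁻¹).re * a.re + bz.re := by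
    simp [Complex.add_re, Complex.mul_re, haim]
  rw [hre]
  linarith [hmain, hdiff]
end
end
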